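/- Fix N ≥ 1 and 1/2 ≤ s < 1. Define m(k) = 1 for |k| ≤ N and m(k) = |k|^{s−1}N^{1−s} for |k| > N. Suppose |k1| ~ |k2| ~ |k3| ~ |k4| ≥ N (all comparable with implicit constant 2, say) and k1 + k2 + k3 + k4 = 0. Then |1 − m(k1)/(m(k2)m(k3)m(k4))| ≤ C·N^{−1}·|k4| for a constant C depending only on s. -/
import Mathlib


open Real

/-- I-method multiplier bound in the all-high frequency case: if all frequencies are
comparable (with constant 2), at least `N` in size, and sum to zero, then
`|1 − m(k1)/(m(k2)m(k3)m(k4))| ≤ C N⁻¹ |k4|`, `C = C(s)`. -/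
theorem stmt_4 (s : ℝ) (hs : 1 / 2 ≤ s) (hs1 : s < 1) :
    ∃ C > 0, ∀ N k1 k2 k3 k4 : ℝ, 1 ≤ N →
      N ≤ |k1| → N ≤ |k2| → N ≤ |k3| → N ≤ |k4| →
      |k1| ≤ 2 * |k2| → |k2| ≤ 2 * |k1| →
      |k1| ≤ 2 * |k3| → |k3| ≤ 2 * |k1| →
      |k1| ≤ 2 * |k4| → |k4| ≤ 2 * |k1| →
      |k2| ≤ 2 * |k3| → |k3| ≤ 2 * |k2| →
      |k2| ≤ 2 * |k4| → |k4| ≤ 2 * |k2| →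
      |k3| ≤ 2 * |k4| → |k4| ≤ 2 * |k3| →
      k1 + k2 + k3 + k4 = 0 →
      (fun m : ℝ → ℝ =>
        |1 - m k1 / (m k2 * m k3 * m k4)| ≤ C * N⁻¹ * |k4|)
        (fun k => if |k| ≤ N then 1 else |k| ^ (s - 1) * N ^ (1 - s)) := by
  refine ⟨17, by norm_num, ?_⟩
  intro N k1 k2 k3 k4 hN h1 h2 h3 h4 h12 h21 h13 h31 h14 h41 h23 h32 h24 h42 h34 h43 hsum
  simp only
  have hN0 : (0:ℝ) < N := by linarith
  -- rewrite each m value as (|k|/N)^(s-1)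
  have hm : ∀ k : ℝ, N ≤ |k| →
      (if |k| ≤ N then (1:ℝ) else |k| ^ (s - 1) * N ^ (1 - s)) = (|k| / N) ^ (s - 1) := by
    intro k hk
    have hk0 : 0 < |k| := lt_of_lt_of_le hN0 hk
    have hdiv : (|k| / N) ^ (s - 1) = |k| ^ (s - 1) * N ^ (1 - s) := by
      rw [Real.div_rpow (abs_nonneg k) hN0.le, div_eq_mul_inv, ← Real.rpow_neg hN0.le]
      ring_nf
    by_cases h : |k| ≤ N
    · have hkN : |k| = N := le_antisymm h hk
      rw [if_pos h, hdiv, hkN, ← Real.rpow_add hN0]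
      norm_num
    · rw [if_neg h, hdiv]
  rw [hm k1 h1, hm k2 h2, hm k3 h3, hm k4 h4]
  set t1 := |k1| / N with ht1def
  set t2 := |k2| / N with ht2def
  set t3 := |k3| / N with ht3def
  set t4 := |k4| / N with ht4def
  have ht1 : 1 ≤ t1 := (one_le_div hN0).2 h1
  have ht2 : 1 ≤ t2 := (one_le_div hN0).2 h2
  have ht3 : 1 ≤ t3 := (one_le_div hN0).2 h3
  have ht4 : 1 ≤ t4 := (one_le_div hN0).2 h4
  have ht10 : 0 < t1 := by linarith
  have ht20 : 0 < t2 := by linarith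
  have ht30 : 0 < t3 := by linarith
  have ht40 : 0 < t4 := by linarith
  have h21' : t2 ≤ 2 * t1 := by
    rw [ht2def, ht1def, div_le_iff₀ hN0]; rw [mul_assoc, div_mul_cancel₀ _ hN0.ne'] ; linarith
  have h31' : t3 ≤ 2 * t1 := by
    rw [ht3def, ht1def, div_le_iff₀ hN0]; rw [mul_assoc, div_mul_cancel₀ _ hN0.ne'] ; linarith
  have h41' : t4 ≤ 2 * t1 := by
    rw [ht4def, ht1def, div_le_iff₀ hN0]; rw [mul_assoc, div_mul_cancel₀ _ hN0.ne'] ; linarith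
  have h14' : t1 ≤ 2 * t4 := by
    rw [ht1def, ht4def, div_le_iff₀ hN0]; rw [mul_assoc, div_mul_cancel₀ _ hN0.ne'] ; linarith
  -- denominator lower bound: each tj^(s-1) ≥ (2*t1)^(s-1)
  have hs0 : s - 1 ≤ 0 := by linarith
  have hlow : ∀ t : ℝ, 0 < t → t ≤ 2 * t1 → (2 * t1) ^ (s - 1) ≤ t ^ (s - 1) := by
    intro t ht h
    exact Real.rpow_le_rpow_of_nonpos ht h hs0
  have hb := Real.rpow_pos_of_pos (by linarith : (0:ℝ) < 2 * t1) (s - 1)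
  have hd2 := Real.rpow_pos_of_pos ht20 (s - 1)
  have hd3 := Real.rpow_pos_of_pos ht30 (s - 1)
  have hd4 := Real.rpow_pos_of_pos ht40 (s - 1)
  have hnum := Real.rpow_pos_of_pos ht10 (s - 1)
  have hden : (2 * t1) ^ (s - 1) * (2 * t1) ^ (s - 1) * (2 * t1) ^ (s - 1)
      ≤ t2 ^ (s - 1) * t3 ^ (s - 1) * t4 ^ (s - 1) := by
    have e2 := hlow t2 ht20 h21'
    have e3 := hlow t3 ht30 h31'
    have e4 := hlow t4 ht40 h41'
    exact mul_le_mul (mul_le_mul e2 e3 hb.le hd2.le) e4 hb.le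
      (mul_nonneg hd2.le hd3.le)
  have hdenpos : 0 < (2 * t1) ^ (s - 1) * (2 * t1) ^ (s - 1) * (2 * t1) ^ (s - 1) := by positivity
  -- ratio bound
  have hR : t1 ^ (s - 1) / (t2 ^ (s - 1) * t3 ^ (s - 1) * t4 ^ (s - 1)) ≤ 8 * t1 := by
    have step1 : t1 ^ (s - 1) / (t2 ^ (s - 1) * t3 ^ (s - 1) * t4 ^ (s - 1))
        ≤ t1 ^ (s - 1) / ((2 * t1) ^ (s - 1) * (2 * t1) ^ (s - 1) * (2 * t1) ^ (s - 1)) := by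
      exact div_le_div_of_nonneg_left hnum.le hdenpos hden
    refine step1.trans ?_
    rw [div_le_iff₀ hdenpos]
    -- combine powers
    have h2t1 : (0:ℝ) < 2 * t1 := by linarith
    have hcomb : (2 * t1) ^ (s - 1) * (2 * t1) ^ (s - 1) * (2 * t1) ^ (s - 1)
        = (2 * t1) ^ (3 * (s - 1)) := by
      rw [← Real.rpow_add h2t1, ← Real.rpow_add h2t1]; ring_nf
    rw [hcomb, Real.mul_rpow (by norm_num : (0:ℝ) ≤ 2) ht10.le]
    -- goal : t1 ^ (s-1) ≤ 8 * t1 * (2 ^ (3*(s-1)) * t1 ^ (3*(s-1)))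
    have ht1pow : t1 ^ (s - 1) ≤ t1 ^ (3 * s - 2) := by
      apply Real.rpow_le_rpow_of_exponent_le ht1
      linarith
    have hkey : t1 * t1 ^ (3 * (s - 1)) = t1 ^ (3 * s - 2) := by
      nth_rewrite 1 [← Real.rpow_one t1]
      rw [← Real.rpow_add ht10]; ring_nf
    have h2pow : (1:ℝ) ≤ 8 * 2 ^ (3 * (s - 1)) := by
      have : (8:ℝ) = 2 ^ (3:ℝ) := by
        rw [show (3:ℝ) = ((3:ℕ):ℝ) by norm_num, Real.rpow_natCast]; norm_num
      rw [this, ← Real.rpow_add (by norm_num : (0:ℝ) < 2)]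
      apply Real.one_le_rpow (by norm_num) (by linarith)
    calc t1 ^ (s - 1) ≤ t1 ^ (3 * s - 2) := ht1pow
      _ = 1 * t1 ^ (3 * s - 2) := by ring
      _ ≤ (8 * 2 ^ (3 * (s - 1))) * t1 ^ (3 * s - 2) := by
          apply mul_le_mul_of_nonneg_right h2pow (Real.rpow_pos_of_pos ht10 _).le
      _ = 8 * t1 * (2 ^ (3 * (s - 1)) * t1 ^ (3 * (s - 1))) := by
          rw [← hkey]; ring
  have hRpos : 0 ≤ t1 ^ (s - 1) / (t2 ^ (s - 1) * t3 ^ (s - 1) * t4 ^ (s - 1)) := by positivity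
  have habs : |1 - t1 ^ (s - 1) / (t2 ^ (s - 1) * t3 ^ (s - 1) * t4 ^ (s - 1))|
      ≤ 1 + t1 ^ (s - 1) / (t2 ^ (s - 1) * t3 ^ (s - 1) * t4 ^ (s - 1)) := by
    rw [abs_sub_comm]
    calc |t1 ^ (s - 1) / (t2 ^ (s - 1) * t3 ^ (s - 1) * t4 ^ (s - 1)) - 1|
        ≤ |t1 ^ (s - 1) / (t2 ^ (s - 1) * t3 ^ (s - 1) * t4 ^ (s - 1))| + |(1:ℝ)| :=
          abs_sub _ _
      _ = t1 ^ (s - 1) / (t2 ^ (s - 1) * t3 ^ (s - 1) * t4 ^ (s - 1)) + 1 := by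
          rw [abs_of_nonneg hRpos, abs_one]
      _ = 1 + t1 ^ (s - 1) / (t2 ^ (s - 1) * t3 ^ (s - 1) * t4 ^ (s - 1)) := by ring
  have hfin : 17 * N⁻¹ * |k4| = 17 * t4 := by
    rw [ht4def]; ring
  rw [hfin]
  linarith [hR, habs, h14']
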